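/- For every integer m, the cubic governing the points of inflexion of R(x) = (x²+2mx+m²+26)/(x²+2(m-15)x+m²-30m+333) has three rational roots (equivalently, after translating x → x - m, the inflexion cubic of (x²+26)/((x-15)²+108) has three rational roots). -/

import Mathlib

theorem stmt_17 (m : ℤ) (R : ℝ → ℝ)
    (hR : ∀ x : ℝ, R x = (x ^ 2 + 2 * m * x + (m ^ 2 + 26))
        / (x ^ 2 + 2 * (m - 15) * x + (m ^ 2 - 30 * m + 333))) :
    ∃ r₁ r₂ r₃ : ℚ, r₁ ≠ r₂ ∧ r₁ ≠ r₃ ∧ r₂ ≠ r₃ ∧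
      ∀ x : ℝ, iteratedDeriv 2 R x = 0 ↔ (x = r₁ ∨ x = r₂ ∨ x = r₃) := by
  have hRe : R = fun x : ℝ => (x ^ 2 + 2 * m * x + (m ^ 2 + 26))
      / (x ^ 2 + 2 * (m - 15) * x + (m ^ 2 - 30 * m + 333)) := funext hR
  subst hRe
  set a : ℝ := (m : ℝ) with ha
  -- denominator is positive
  have hD : ∀ y : ℝ, (0:ℝ) < y ^ 2 + 2 * (a - 15) * y + (a ^ 2 - 30 * a + 333) := by
    intro y; nlinarith [sq_nonneg (y + (a - 15))]
  have hD0 : ∀ y : ℝ, y ^ 2 + 2 * (a - 15) * y + (a ^ 2 - 30 * a + 333) ≠ 0 :=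
    fun y => (hD y).ne'
  -- first derivative
  have hNd : ∀ y : ℝ, HasDerivAt (fun x : ℝ => x ^ 2 + 2 * a * x + (a ^ 2 + 26))
      (2 * y + 2 * a) y := by
    intro y
    have h1 : HasDerivAt (fun x : ℝ => x ^ 2) (2 * y) y := by
      simpa using hasDerivAt_pow 2 y
    have h2 : HasDerivAt (fun x : ℝ => 2 * a * x) (2 * a) y := by
      simpa using (hasDerivAt_id y).const_mul (2 * a)
    simpa using (h1.add h2).add_const (a ^ 2 + 26)
  have hDd : ∀ y : ℝ, HasDerivAt
      (fun x : ℝ => x ^ 2 + 2 * (a - 15) * x + (a ^ 2 - 30 * a + 333))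
      (2 * y + 2 * (a - 15)) y := by
    intro y
    have h1 : HasDerivAt (fun x : ℝ => x ^ 2) (2 * y) y := by
      simpa using hasDerivAt_pow 2 y
    have h2 : HasDerivAt (fun x : ℝ => 2 * (a - 15) * x) (2 * (a - 15)) y := by
      simpa using (hasDerivAt_id y).const_mul (2 * (a - 15))
    simpa using (h1.add h2).add_const (a ^ 2 - 30 * a + 333)
  -- notation for numerator, denominator, first-derivative expression
  set N : ℝ → ℝ := fun x => x ^ 2 + 2 * a * x + (a ^ 2 + 26) with hN
  set D : ℝ → ℝ := fun x => x ^ 2 + 2 * (a - 15) * x + (a ^ 2 - 30 * a + 333) with hDdef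
  set G : ℝ → ℝ := fun y =>
      ((2 * y + 2 * a) * D y - N y * (2 * y + 2 * (a - 15))) / (D y) ^ 2 with hG
  have hR1 : ∀ y : ℝ, HasDerivAt (fun x : ℝ => N x / D x) (G y) y := by
    intro y
    exact (hNd y).div (hDd y) (hD0 y)
  have hderiv1 : deriv (fun x : ℝ => N x / D x) = G := funext fun y => (hR1 y).deriv
  -- second derivative
  have hAd : ∀ y : ℝ, HasDerivAt
      (fun x : ℝ => (2 * x + 2 * a) * D x - N x * (2 * x + 2 * (a - 15)))
      ((2 * D y + (2 * y + 2 * a) * (2 * y + 2 * (a - 15)))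
        - ((2 * y + 2 * a) * (2 * y + 2 * (a - 15)) + N y * 2)) y := by
    intro y
    have hl1 : HasDerivAt (fun x : ℝ => 2 * x + 2 * a) 2 y := by
      simpa using ((hasDerivAt_id y).const_mul 2).add_const (2 * a)
    have hl2 : HasDerivAt (fun x : ℝ => 2 * x + 2 * (a - 15)) 2 y := by
      simpa using ((hasDerivAt_id y).const_mul 2).add_const (2 * (a - 15))
    have h1 := hl1.mul (hDd y)
    have h2 := (hNd y).mul hl2
    exact (h1.sub h2).congr_deriv (by ring)
  have hDsq : ∀ y : ℝ, HasDerivAt (fun x : ℝ => (D x) ^ 2)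
      (2 * D y * (2 * y + 2 * (a - 15))) y := by
    intro y
    have := (hDd y).fun_pow 2
    exact this.congr_deriv (by simp)
  have hR2 : ∀ y : ℝ, HasDerivAt G
      ((((2 * D y + (2 * y + 2 * a) * (2 * y + 2 * (a - 15)))
        - ((2 * y + 2 * a) * (2 * y + 2 * (a - 15)) + N y * 2)) * (D y) ^ 2
        - ((2 * y + 2 * a) * D y - N y * (2 * y + 2 * (a - 15)))
          * (2 * D y * (2 * y + 2 * (a - 15)))) / ((D y) ^ 2) ^ 2) y := by
    intro y
    exact (hAd y).div (hDsq y) (pow_ne_zero 2 (hD0 y))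
  refine ⟨-11 - m, 27/2 - m, 141/5 - m, by intro h; linarith [sub_left_inj.mp h],
    by intro h; linarith [sub_left_inj.mp h], by intro h; linarith [sub_left_inj.mp h], ?_⟩
  intro y
  have hcast : ∀ x : ℝ, (x ^ 2 + 2 * (m:ℝ) * x + ((m:ℝ) ^ 2 + 26))
      / (x ^ 2 + 2 * ((m:ℝ) - 15) * x + ((m:ℝ) ^ 2 - 30 * (m:ℝ) + 333)) = N x / D x := by
    intro x; rw [hN, hDdef]
  have hiter : iteratedDeriv 2 (fun x : ℝ => N x / D x) y
      = (((2 * D y + (2 * y + 2 * a) * (2 * y + 2 * (a - 15)))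
        - ((2 * y + 2 * a) * (2 * y + 2 * (a - 15)) + N y * 2)) * (D y) ^ 2
        - ((2 * y + 2 * a) * D y - N y * (2 * y + 2 * (a - 15)))
          * (2 * D y * (2 * y + 2 * (a - 15)))) / ((D y) ^ 2) ^ 2 := by
    rw [show (2:ℕ) = 1 + 1 from rfl, iteratedDeriv_succ, iteratedDeriv_one, hderiv1]
    exact (hR2 y).deriv
  have hfun : (fun x : ℝ => (x ^ 2 + 2 * (m:ℝ) * x + ((m:ℝ) ^ 2 + 26))
      / (x ^ 2 + 2 * ((m:ℝ) - 15) * x + ((m:ℝ) ^ 2 - 30 * (m:ℝ) + 333)))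
      = fun x : ℝ => N x / D x := funext hcast
  have key : iteratedDeriv 2 (fun x : ℝ => (x ^ 2 + 2 * (m:ℝ) * x + ((m:ℝ) ^ 2 + 26))
      / (x ^ 2 + 2 * ((m:ℝ) - 15) * x + ((m:ℝ) ^ 2 - 30 * (m:ℝ) + 333))) y = 0
      ↔ (y = ((-11 - m : ℚ) : ℝ) ∨ y = ((27/2 - m : ℚ) : ℝ) ∨ y = ((141/5 - m : ℚ) : ℝ)) := by
    rw [hfun, hiter]
    rw [div_eq_zero_iff]
    have hden : ((D y) ^ 2) ^ 2 ≠ 0 := pow_ne_zero 2 (pow_ne_zero 2 (hD0 y))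
    have hnum : (((2 * D y + (2 * y + 2 * a) * (2 * y + 2 * (a - 15)))
        - ((2 * y + 2 * a) * (2 * y + 2 * (a - 15)) + N y * 2)) * (D y) ^ 2
        - ((2 * y + 2 * a) * D y - N y * (2 * y + 2 * (a - 15)))
          * (2 * D y * (2 * y + 2 * (a - 15))))
        = D y * (6 * ((y + a + 11) * ((2 * (y + a) - 27) * (5 * (y + a) - 141)))) := by
      rw [hN, hDdef]; ring
    rw [hnum]
    constructor
    · rintro (h | h)
      · rcases mul_eq_zero.mp h with h | h
        · exact absurd h (hD0 y)
        rcases mul_eq_zero.mp h with h | h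
        · norm_num at h
        rcases mul_eq_zero.mp h with h | h
        · left; push_cast; linarith
        rcases mul_eq_zero.mp h with h | h
        · right; left; push_cast; linarith
        · right; right; push_cast; linarith
      · exact absurd h hden
    · rintro (h | h | h) <;> left <;>
        (push_cast at h; rw [h]; ring)
  exact key
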